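/- arXiv:1905.02382 — 2 statements merged into one kernel-verified Lean document; each statement's English description precedes it below -/
import Mathlib

section
/- Let A be a finite abelian group and let G = ℤ ⋉ A be a semidirect product where 1 ∈ ℤ acts by an automorphism σ of A. Then the restriction to A of any finite-dimensional complex irreducible representation of G decomposes as a direct sum of pairwise distinct one-dimensional representations (characters) of A. -/
open SemidirectProduct

/-- A representation is irreducible: nontrivial and no proper nonzero invariant subspace. -/
def IsIrrep {k G V : Type*} [CommRing k] [Group G] [AddCommGroup V] [Module k V]
    (ρ : Representation k G V) : Prop :=
  Nontrivial V ∧ ∀ W : Submodule k V, (∀ g, ∀ v ∈ W, ρ g v ∈ W) → W = ⊥ ∨ W = ⊤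

/-- The simultaneous eigenspace `V_χ` for a character `χ` of an abelian group. -/
def charSpace {A V : Type*} [CommGroup A] [AddCommGroup V] [Module ℂ V]
    (ρ : Representation ℂ A V) (χ : A →* ℂˣ) : Submodule ℂ V where
  carrier := {v | ∀ a, ρ a v = (χ a : ℂ) • v}
  add_mem' := by intro x y hx hy a; simp [hx a, hy a, smul_add]
  zero_mem' := by intro a; simp
  smul_mem' := by intro c x hx a; simp [hx a, smul_comm c]

section Aux

open Module Module.End Polynomial

variable {A V : Type} [CommGroup A] [Fintype A] [AddCommGroup V] [Module ℂ V]

lemma mem_charSpace_iff (ρA : Representation ℂ A V) (χ : A →* ℂˣ) (v : V) :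
    v ∈ charSpace ρA χ ↔ ∀ a, ρA a v = (χ a : ℂ) • v := Iff.rfl

lemma maxGen_eq_eigen (ρA : Representation ℂ A V) (a : A) (μ : ℂ) :
    Module.End.maxGenEigenspace (ρA a) μ = Module.End.eigenspace (ρA a) μ := by
  have hz : Polynomial.aeval (R := ℂ) (ρA a : Module.End ℂ V) (X ^ Fintype.card A - 1) = 0 := by
    rw [map_sub, map_one, aeval_X_pow, sub_eq_zero, ← map_pow, pow_card_eq_one, map_one]
  have hn : ((Fintype.card A : ℕ) : ℂ) ≠ 0 := Nat.cast_ne_zero.mpr Fintype.card_ne_zero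
  have hsq : Squarefree (X ^ Fintype.card A - 1 : ℂ[X]) :=
    (Polynomial.X_pow_sub_one_separable_iff.mpr hn).squarefree
  exact ((Module.End.isSemisimple_of_squarefree_aeval_eq_zero hsq
    hz).isFinitelySemisimple).maxGenEigenspace_eq_eigenspace μ

/-- Precompose a character with `σ⁻¹`. -/
def nextc (σ : MulAut A) (χ : A →* ℂˣ) : A →* ℂˣ :=
  χ.comp (σ⁻¹ : MulAut A).toMonoidHom

lemma nextc_iterate (σ : MulAut A) (k : ℕ) (χ : A →* ℂˣ) (a : A) :
    ((nextc σ)^[k] χ) a = χ (((σ⁻¹ : MulAut A) ^ k) a) := by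
  induction k generalizing χ a with
  | zero => simp
  | succ k ih =>
    rw [Function.iterate_succ_apply, ih, pow_succ', MulAut.mul_apply]
    rfl

end Aux

/-- The restriction to `A` of any finite-dimensional complex irreducible representation of
`G = ℤ ⋉ A` (with `1 ∈ ℤ` acting by `σ`) is a direct sum of pairwise distinct characters:
the eigenspaces are independent, they span `V`, and each has dimension at most one. -/
theorem stmt0 {A V : Type} [CommGroup A] [Fintype A] [AddCommGroup V] [Module ℂ V]
    [FiniteDimensional ℂ V] (σ : MulAut A)
    (ρ : Representation ℂ (A ⋊[zpowersHom (MulAut A) σ] Multiplicative ℤ) V)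
    (hirr : IsIrrep ρ) :
    iSupIndep (fun χ : A →* ℂˣ => charSpace (ρ.comp inl) χ) ∧
    (⨆ χ : A →* ℂˣ, charSpace (ρ.comp inl) χ) = ⊤ ∧
    ∀ χ : A →* ℂˣ, Module.finrank ℂ (charSpace (ρ.comp inl) χ) ≤ 1 := by
  classical
  obtain ⟨hnt, hsimp⟩ := hirr
  set ρA := ρ.comp inl with hρA
  -- commuting family of endomorphisms
  have hcomm : ∀ a b : A, Commute (ρA a : Module.End ℂ V) (ρA b) := by
    intro a b
    rw [Commute, SemiconjBy, ← map_mul, ← map_mul, mul_comm]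
  have hmax : ∀ (a : A) (μ : ℂ),
      Module.End.maxGenEigenspace (ρA a) μ = Module.End.eigenspace (ρA a) μ :=
    maxGen_eq_eigen ρA
  have hcs : ∀ χ : A →* ℂˣ, charSpace ρA χ =
      ⨅ a : A, Module.End.maxGenEigenspace (ρA a) ((χ a : ℂ)) := by
    intro χ
    ext v
    simp only [mem_charSpace_iff, Submodule.mem_iInf, hmax, Module.End.mem_eigenspace_iff]
  -- independence
  have hindep0 : iSupIndep fun ξ : A → ℂ =>
      ⨅ a : A, Module.End.maxGenEigenspace (ρA a) (ξ a) :=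
    Module.End.independent_iInf_maxGenEigenspace_of_forall_mapsTo (fun a => ρA a)
      (fun i j φ => Module.End.mapsTo_maxGenEigenspace_of_comm (hcomm j i) φ)
  have hinj : Function.Injective (fun (χ : A →* ℂˣ) (a : A) => (χ a : ℂ)) := by
    intro χ₁ χ₂ h
    ext a
    exact congrFun h a
  have hindep : iSupIndep fun χ : A →* ℂˣ => charSpace ρA χ := by
    have h2 := hindep0.comp hinj
    have heq : (fun χ : A →* ℂˣ => charSpace ρA χ) =
        (fun ξ : A → ℂ => ⨅ a : A, Module.End.maxGenEigenspace (ρA a) (ξ a)) ∘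
          (fun (χ : A →* ℂˣ) (a : A) => (χ a : ℂ)) := funext hcs
    rw [heq]
    exact h2
  -- spanning
  have hsup0 : ⨆ ξ : A → ℂ, ⨅ a : A, Module.End.maxGenEigenspace (ρA a) (ξ a) = ⊤ :=
    Module.End.iSup_iInf_maxGenEigenspace_eq_top_of_iSup_maxGenEigenspace_eq_top_of_commute
      (fun a => ρA a) (fun i j _ => hcomm i j)
      (fun a => Module.End.iSup_maxGenEigenspace_eq_top _)
  have hsup : (⨆ χ : A →* ℂˣ, charSpace ρA χ) = ⊤ := by
    rw [eq_top_iff, ← hsup0]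
    refine iSup_le fun ξ => ?_
    rcases eq_or_ne (⨅ a : A, Module.End.maxGenEigenspace (ρA a) (ξ a)) ⊥ with hb | hb
    · rw [hb]; exact bot_le
    · obtain ⟨v, hv, hv0⟩ := (Submodule.ne_bot_iff _).mp hb
      have hva : ∀ a, ρA a v = ξ a • v := by
        intro a
        have h := (Submodule.mem_iInf _).mp hv a
        rw [hmax, Module.End.mem_eigenspace_iff] at h
        exact h
      have hmul : ∀ a b, ξ (a * b) = ξ a * ξ b := by
        intro a b
        refine smul_left_injective ℂ hv0 ?_
        calc ξ (a * b) • v = ρA (a * b) v := (hva _).symm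
          _ = ρA a (ρA b v) := by rw [map_mul]; rfl
          _ = (ξ a * ξ b) • v := by
              rw [hva b, map_smul, hva a, smul_smul, mul_comm (ξ b) (ξ a)]
      have h1 : ξ 1 = 1 := by
        refine smul_left_injective ℂ hv0 ?_
        calc ξ 1 • v = ρA 1 v := (hva _).symm
          _ = (1 : ℂ) • v := by simp
      have hne : ∀ a, ξ a ≠ 0 := by
        intro a
        have : ξ a * ξ a⁻¹ = 1 := by rw [← hmul, mul_inv_cancel, h1]
        exact left_ne_zero_of_mul_eq_one this
      let χ : A →* ℂˣ :=
        { toFun := fun a => Units.mk0 (ξ a) (hne a),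
          map_one' := Units.ext (by simpa using h1),
          map_mul' := fun a b => Units.ext (by simpa using hmul a b) }
      have hchi : (⨅ a : A, Module.End.maxGenEigenspace (ρA a) (ξ a)) = charSpace ρA χ := by
        rw [hcs χ]
        rfl
      rw [hchi]
      exact le_iSup (fun χ : A →* ℂˣ => charSpace ρA χ) χ
  refine ⟨hindep, hsup, ?_⟩
  -- multiplicity at most one
  intro χ
  rcases eq_or_ne (charSpace ρA χ) ⊥ with hb | hb
  · rw [hb]
    simp
  haveI : Finite (MulAut A) :=
    Finite.of_injective (fun e => (e : A → A)) DFunLike.coe_injective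
  set t : A ⋊[zpowersHom (MulAut A) σ] Multiplicative ℤ := inr (Multiplicative.ofAdd 1) with ht
  set T : Module.End ℂ V := ρ t with hT
  have hcomm_rel : ∀ a : A, (inl a : A ⋊[zpowersHom (MulAut A) σ] Multiplicative ℤ) * t
      = t * inl (σ⁻¹ a) := by
    intro a
    have h := inl_aut (φ := zpowersHom (MulAut A) σ) (Multiplicative.ofAdd (1 : ℤ)) (σ⁻¹ a)
    have h2 : zpowersHom (MulAut A) σ (Multiplicative.ofAdd (1 : ℤ)) (σ⁻¹ a) = a := by
      rw [zpowersHom_apply, toAdd_ofAdd, zpow_one, MulAut.apply_inv_self]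
    rw [h2] at h
    rw [ht, h, map_inv, inv_mul_cancel_right]
  set c : ℕ → (A →* ℂˣ) := fun k => (nextc σ)^[k] χ with hc
  have hstep : ∀ (χ' : A →* ℂˣ) (v : V), v ∈ charSpace ρA χ' →
      T v ∈ charSpace ρA (nextc σ χ') := by
    intro χ' v hv a
    have e1 : ρA a (T v) = ρ ((inl a) * t) v := by rw [map_mul]; rfl
    have e2 : ρA a (T v) = T (ρA (σ⁻¹ a) v) := by
      rw [e1, hcomm_rel a, map_mul]; rfl
    show ρA a (T v) = _
    rw [e2, hv (σ⁻¹ a), map_smul]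
    rfl
  have hiter : ∀ (k : ℕ) (w : V), w ∈ charSpace ρA χ → (T ^ k) w ∈ charSpace ρA (c k) := by
    intro k
    induction k with
    | zero => intro w hw; simpa [hc] using hw
    | succ k ih =>
      intro w hw
      rw [show (T ^ (k+1)) w = T ((T ^ k) w) from by rw [pow_succ', Module.End.mul_apply]]
      have h4 : c (k + 1) = nextc σ (c k) := by
        simp only [hc]
        exact Function.iterate_succ_apply' _ _ _
      rw [h4]
      exact hstep (c k) _ (ih w hw)
  -- period of χ under σ
  have hex : ∃ m, 0 < m ∧ c m = χ := by
    refine ⟨orderOf σ, orderOf_pos σ, ?_⟩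
    refine MonoidHom.ext fun a => ?_
    have hp : ((σ⁻¹ : MulAut A) ^ orderOf σ) = 1 := by
      rw [inv_pow, pow_orderOf_eq_one, inv_one]
    simp only [hc]
    rw [nextc_iterate, hp, MulAut.one_apply]
  set m := Nat.find hex with hm
  obtain ⟨hm0, hcm⟩ := Nat.find_spec hex
  have hdist : ∀ k : ℕ, 0 < k → k < m → c k ≠ χ := by
    intro k hk0 hkm hck
    exact Nat.find_min hex hkm ⟨hk0, hck⟩
  -- an eigenvector of T^m inside charSpace χ
  have hTm : Set.MapsTo (T ^ m) (charSpace ρA χ) (charSpace ρA χ) := by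
    intro w hw
    have := hiter m w hw
    rwa [hcm] at this
  haveI : Nontrivial (charSpace ρA χ) := Submodule.nontrivial_iff_ne_bot.mpr hb
  obtain ⟨μ, hμ⟩ := Module.End.exists_eigenvalue ((T ^ m).restrict hTm)
  obtain ⟨vv, hve⟩ := hμ.exists_hasEigenvector
  have hvχ : (vv : V) ∈ charSpace ρA χ := vv.2
  have hv0 : (vv : V) ≠ 0 := fun h => hve.2 (Subtype.ext h)
  have hTmv : (T ^ m) (vv : V) = μ • (vv : V) := by
    have h5 := Module.End.mem_eigenspace_iff.mp hve.1
    exact congrArg Subtype.val h5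
  set v : V := (vv : V) with hvdef
  -- the homomorphism z ↦ ρ(inr z)
  set Tz : Multiplicative ℤ →* Module.End ℂ V := ρ.comp inr with hTzdef
  have hTzadd : ∀ x y : ℤ, Tz (Multiplicative.ofAdd (x + y))
      = Tz (Multiplicative.ofAdd x) * Tz (Multiplicative.ofAdd y) := by
    intro x y
    rw [ofAdd_add, map_mul]
  have hTzpow : ∀ k : ℕ, Tz (Multiplicative.ofAdd ((k : ℕ) : ℤ)) = T ^ k := by
    intro k
    rw [show (((k : ℕ) : ℤ)) = k • (1 : ℤ) by simp, ofAdd_nsmul, map_pow]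
    rfl
  have hTzinv : ∀ x : ℤ, Tz (Multiplicative.ofAdd (-x)) * Tz (Multiplicative.ofAdd x) = 1 := by
    intro x
    rw [← map_mul, ← ofAdd_add, neg_add_cancel, ofAdd_zero, map_one]
  have h6 : Tz (Multiplicative.ofAdd (-(m : ℤ))) ((T ^ m) v) = v := by
    rw [← hTzpow m, ← Module.End.mul_apply, hTzinv]
    rfl
  have hμ0 : μ ≠ 0 := by
    intro h0
    apply hv0
    rw [hTmv, h0, zero_smul, map_zero] at h6
    exact h6.symm
  have hTneg : Tz (Multiplicative.ofAdd (-(m : ℤ))) v = μ⁻¹ • v := by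
    rw [hTmv, map_smul] at h6
    exact ((inv_smul_eq_iff₀ hμ0).mpr h6.symm).symm
  have hqm : ∀ q : ℤ, Tz (Multiplicative.ofAdd ((m : ℤ) * q)) v = (μ ^ q) • v := by
    intro q
    induction q using Int.induction_on with
    | zero =>
      rw [mul_zero, ofAdd_zero, map_one, zpow_zero, one_smul]
      rfl
    | succ k ih =>
      rw [show (m : ℤ) * ((k : ℤ) + 1) = (m : ℤ) * k + (m : ℤ) by ring, hTzadd,
        Module.End.mul_apply, hTzpow m, hTmv, map_smul, ih, smul_smul]
      rw [show μ * μ ^ (k : ℤ) = μ ^ ((k : ℤ) + 1) by rw [zpow_add_one₀ hμ0]; ring]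
    | pred k ih =>
      rw [show (m : ℤ) * (-(k : ℤ) - 1) = (m : ℤ) * (-(k : ℤ)) + (-(m : ℤ)) by ring, hTzadd,
        Module.End.mul_apply, hTneg, map_smul, ih, smul_smul]
      rw [show μ⁻¹ * μ ^ (-(k : ℤ)) = μ ^ (-(k : ℤ) - 1) by rw [zpow_sub_one₀ hμ0]; ring]
  have hall : ∀ n : ℤ, ∃ (d : ℂ) (k : ℕ), k < m ∧ Tz (Multiplicative.ofAdd n) v = d • (T ^ k) v := by
    intro n
    have hmz : (0 : ℤ) < (m : ℤ) := by exact_mod_cast hm0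
    have h7 : n % (m : ℤ) < (m : ℤ) := Int.emod_lt_of_pos n hmz
    have h8 : 0 ≤ n % (m : ℤ) := Int.emod_nonneg n hmz.ne'
    refine ⟨μ ^ (n / (m : ℤ)), (n % (m : ℤ)).toNat, by omega, ?_⟩
    calc Tz (Multiplicative.ofAdd n) v
        = Tz (Multiplicative.ofAdd ((m : ℤ) * (n / (m : ℤ)) + n % (m : ℤ))) v := by
          rw [Int.mul_ediv_add_emod]
      _ = Tz (Multiplicative.ofAdd (n % (m : ℤ)))
            (Tz (Multiplicative.ofAdd ((m : ℤ) * (n / (m : ℤ)))) v) := by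
          rw [add_comm, hTzadd, Module.End.mul_apply]
      _ = (μ ^ (n / (m : ℤ))) • Tz (Multiplicative.ofAdd (n % (m : ℤ))) v := by
          rw [hqm, map_smul]
      _ = (μ ^ (n / (m : ℤ))) • (T ^ (n % (m : ℤ)).toNat) v := by
          rw [← hTzpow, Int.toNat_of_nonneg h8]
  -- the invariant subspace spanned by the orbit of v
  set W : Submodule ℂ V := Submodule.span ℂ (Set.range fun k : Fin m => (T ^ (k : ℕ)) v) with hW
  have hgen : ∀ k : Fin m, (T ^ (k : ℕ)) v ∈ W := fun k => Submodule.subset_span ⟨k, rfl⟩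
  have hWv : v ∈ W := by
    have := hgen ⟨0, hm0⟩
    simpa using this
  have hWchar : ∀ (a : A), ∀ x ∈ W, ρA a x ∈ W := by
    intro a x hx
    induction hx using Submodule.span_induction with
    | mem x hxx =>
      obtain ⟨k, rfl⟩ := hxx
      show ρA a ((T ^ (k : ℕ)) v) ∈ W
      rw [(mem_charSpace_iff ρA (c (k : ℕ)) _).mp (hiter (k : ℕ) v hvχ) a]
      exact Submodule.smul_mem _ _ (hgen k)
    | zero => simpa using Submodule.zero_mem W
    | add x y hxW hyW ihx ihy =>
      rw [map_add]
      exact Submodule.add_mem _ ihx ihy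
    | smul r x hxW ihx =>
      rw [map_smul]
      exact Submodule.smul_mem _ _ ihx
  have hWT : ∀ (z : ℤ), ∀ x ∈ W, Tz (Multiplicative.ofAdd z) x ∈ W := by
    intro z x hx
    induction hx using Submodule.span_induction with
    | mem x hxx =>
      obtain ⟨k, rfl⟩ := hxx
      show Tz (Multiplicative.ofAdd z) ((T ^ (k : ℕ)) v) ∈ W
      rw [← hTzpow (k : ℕ), ← Module.End.mul_apply, ← hTzadd]
      obtain ⟨d, j, hj, hdj⟩ := hall (z + ((k : ℕ) : ℤ))
      rw [hdj]
      exact Submodule.smul_mem _ _ (hgen ⟨j, hj⟩)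
    | zero => simpa using Submodule.zero_mem W
    | add x y hxW hyW ihx ihy =>
      rw [map_add]
      exact Submodule.add_mem _ ihx ihy
    | smul r x hxW ihx =>
      rw [map_smul]
      exact Submodule.smul_mem _ _ ihx
  have hWinv : ∀ g, ∀ x ∈ W, ρ g x ∈ W := by
    intro g x hx
    rw [← inl_left_mul_inr_right g, map_mul, Module.End.mul_apply]
    exact hWchar g.left _ (hWT (Multiplicative.toAdd g.right) x hx)
  have hWtop : W = ⊤ := by
    rcases hsimp W hWinv with h | h
    · exfalso
      apply hv0
      rw [h] at hWv
      simpa using hWv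
    · exact h
  -- conclude
  have hle : charSpace ρA χ ≤ Submodule.span ℂ {v} := by
    intro w hw
    have hwW : w ∈ W := by rw [hWtop]; exact Submodule.mem_top
    rw [hW] at hwW
    obtain ⟨d, hd⟩ := (Submodule.mem_span_range_iff_exists_fun ℂ).mp hwW
    have hu1 : w - d ⟨0, hm0⟩ • v ∈ charSpace ρA χ :=
      Submodule.sub_mem _ hw (Submodule.smul_mem _ _ hvχ)
    have hu2 : w - d ⟨0, hm0⟩ • v ∈ ⨆ (χ' : A →* ℂˣ) (_ : χ' ≠ χ), charSpace ρA χ' := by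
      have he : w - d ⟨0, hm0⟩ • v
          = ∑ k ∈ Finset.univ.erase (⟨0, hm0⟩ : Fin m), d k • (T ^ (k : ℕ)) v := by
        rw [← hd, ← Finset.sum_erase_add _ _ (Finset.mem_univ (⟨0, hm0⟩ : Fin m))]
        simp
      rw [he]
      refine Submodule.sum_mem _ fun k hk => ?_
      have hk0 : (k : ℕ) ≠ 0 := by
        intro h0
        exact (Finset.mem_erase.mp hk).1 (Fin.ext h0)
      have hne2 : c (k : ℕ) ≠ χ := hdist _ (Nat.pos_of_ne_zero hk0) k.2
      exact Submodule.mem_iSup_of_mem (c (k : ℕ)) (Submodule.mem_iSup_of_mem hne2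
        (Submodule.smul_mem _ _ (hiter _ v hvχ)))
    have hu0 : w - d ⟨0, hm0⟩ • v = 0 :=
      (Submodule.disjoint_def.mp (hindep χ)) _ hu1 hu2
    rw [Submodule.mem_span_singleton]
    exact ⟨d ⟨0, hm0⟩, (sub_eq_zero.mp hu0).symm⟩
  calc Module.finrank ℂ (charSpace ρA χ) ≤ Module.finrank ℂ (Submodule.span ℂ {v})
      := Submodule.finrank_mono hle
    _ = 1 := finrank_span_singleton hv0
end

section
/- Let A be a finite abelian group, σ an automorphism of A, and V a finite-dimensional complex irreducible representation of G = ℤ ⋉ A. For each character χ of A occurring in the restriction of V to A, the χ-eigenspace V_χ = {v ∈ V | a·v = χ(a)v for all a ∈ A} is one-dimensional. -/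
open SemidirectProduct

lemma charSum_eq_zero {A : Type} [CommGroup A] [Fintype A] (ψ : A →* ℂˣ)
    (h : ∃ b, ψ b ≠ 1) : ∑ a, (ψ a : ℂ) = 0 := by
  obtain ⟨b, hb⟩ := h
  have h1 : (ψ b : ℂ) * ∑ a, (ψ a : ℂ) = ∑ a, (ψ a : ℂ) := by
    rw [Finset.mul_sum]
    exact Fintype.sum_bijective (fun a => b * a) (Group.mulLeft_bijective b) _ _
      (fun a => by rw [← Units.val_mul, ← map_mul])
  have h2 : ((ψ b : ℂ) - 1) * ∑ a, (ψ a : ℂ) = 0 := by rw [sub_mul, h1]; ring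
  rcases mul_eq_zero.1 h2 with h | h
  · exact absurd (Units.val_eq_one.1 (sub_eq_zero.1 h)) hb
  · exact h

/-- Each character eigenspace occurring in the restriction to `A` of a finite-dimensional
complex irreducible representation of `ℤ ⋉ A` is one-dimensional. -/
theorem stmt1 {A V : Type} [CommGroup A] [Fintype A] [AddCommGroup V] [Module ℂ V]
    [FiniteDimensional ℂ V] (σ : MulAut A)
    (ρ : Representation ℂ (A ⋊[zpowersHom (MulAut A) σ] Multiplicative ℤ) V)
    (hirr : IsIrrep ρ) (χ : A →* ℂˣ) (hχ : charSpace (ρ.comp inl) χ ≠ ⊥) :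
    Module.finrank ℂ (charSpace (ρ.comp inl) χ) = 1 := by
  classical
  set Vχ := charSpace (ρ.comp inl) χ with hVχ
  have memχ : ∀ {w : V}, w ∈ Vχ ↔ ∀ a, ρ (inl a) w = (χ a : ℂ) • w := Iff.rfl
  set ι : ℤ → (A ⋊[zpowersHom (MulAut A) σ] Multiplicative ℤ) :=
    fun n => inr (Multiplicative.ofAdd n) with hι
  have ιadd : ∀ m n : ℤ, ι m * ι n = ι (m + n) := by
    intro m n; rw [hι]; dsimp only; rw [← map_mul, ← ofAdd_add]
  have ι0 : ι 0 = 1 := by rw [hι]; dsimp only; rw [ofAdd_zero, map_one]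
  have compose : ∀ (x y : A ⋊[zpowersHom (MulAut A) σ] Multiplicative ℤ) (w : V),
      ρ (x * y) w = ρ x (ρ y w) := fun x y w => by rw [map_mul]; rfl
  have comm : ∀ (a : A) (n : ℤ), inl a * ι n = ι n * inl ((σ ^ (-n)) a) := by
    intro a n
    ext
    · simp [hι, zpowersHom_apply, ← MulAut.mul_apply, ← zpow_add, -MulAut.coe_mul]
      rw [MulAut.mul_apply, MulEquiv.apply_symm_apply]
    · simp [hι]
  have act : ∀ {w : V}, w ∈ Vχ → ∀ (n : ℤ) (a : A),
      ρ (inl a) (ρ (ι n) w) = (χ ((σ ^ (-n)) a) : ℂ) • ρ (ι n) w := by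
    intro w hw n a
    rw [← compose, comm a n, compose, memχ.1 hw, map_smul]
  -- the stabilizer subgroup of χ in ℤ
  set S : AddSubgroup ℤ :=
    { carrier := {n : ℤ | ∀ a, χ ((σ ^ n) a) = χ a}
      zero_mem' := by intro a; simp
      add_mem' := by
        intro m n hm hn a
        rw [zpow_add, MulAut.mul_apply]
        rw [hm ((σ ^ n) a), hn a]
      neg_mem' := by
        intro n hn a
        have := hn ((σ ^ (-n)) a)
        rw [← MulAut.mul_apply, ← zpow_add, add_neg_cancel, zpow_zero,
          MulAut.one_apply] at this
        exact this.symm } with hS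
  have memS : ∀ n : ℤ, n ∈ S ↔ ∀ a, χ ((σ ^ n) a) = χ a := fun n => Iff.rfl
  obtain ⟨g, hg⟩ := Int.subgroup_cyclic S
  have memSg : ∀ n : ℤ, n ∈ S ↔ ∃ k : ℤ, k * g = n := by
    intro n
    rw [hg, AddSubgroup.mem_closure_singleton]
    simp [zsmul_eq_mul]
  have hgS : g ∈ S := by
    rw [hg]; exact AddSubgroup.subset_closure rfl
  have : Finite (MulAut A) :=
    Finite.of_injective (fun f => (f : A → A)) (fun f g h => by
      apply DFunLike.ext; intro a; exact congrFun h a)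
  have hordS : (orderOf σ : ℤ) ∈ S := by
    rw [memS]; intro a
    rw [zpow_natCast, pow_orderOf_eq_one σ, MulAut.one_apply]
  have hgne : g ≠ 0 := by
    rintro rfl
    obtain ⟨k, hk⟩ := (memSg _).1 hordS
    have := orderOf_pos σ
    omega
  -- nontriviality of Vχ and an eigenvector of ρ(ι g) inside it
  have hVχnt : Nontrivial Vχ := Submodule.nontrivial_iff_ne_bot.2 hχ
  have hinv : ∀ w ∈ Vχ, ρ (ι g) w ∈ Vχ := by
    intro w hw
    rw [memχ]; intro a
    rw [act hw g a, (memS _).1 (S.neg_mem hgS) a]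
  obtain ⟨μ, hμ⟩ := Module.End.exists_eigenvalue ((ρ (ι g)).restrict hinv)
  obtain ⟨x, hx⟩ := hμ.exists_hasEigenvector
  set v : V := (x : V) with hv'
  have hv : v ∈ Vχ := x.2
  have hvne : v ≠ 0 := fun h => hx.2 (by exact_mod_cast Subtype.ext h)
  have hTv : ρ (ι g) v = μ • v := by
    have := congrArg (Subtype.val) hx.apply_eq_smul
    simpa using this
  have hμ0 : μ ≠ 0 := by
    rintro rfl
    rw [zero_smul] at hTv
    have h2 : ρ (ι (-g)) (ρ (ι g) v) = v := by
      rw [← compose, ιadd, neg_add_cancel, ι0, map_one]; rfl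
    rw [hTv, map_zero] at h2
    exact hvne h2.symm
  -- powers
  have ekg : ∀ k : ℤ, ρ (ι (k * g)) v = (μ ^ k) • v := by
    have step : ∀ n : ℤ, ρ (ι (n + g)) v = μ • ρ (ι n) v := by
      intro n
      rw [← ιadd, compose, hTv, map_smul]
    intro k
    induction k using Int.induction_on with
    | zero => simp [ι0]
    | succ k ih =>
      have h1 := step ((k : ℤ) * g)
      rw [ih] at h1
      rw [show ((k : ℤ) + 1) * g = (k : ℤ) * g + g by ring, h1, smul_smul, mul_comm,
        ← zpow_add_one₀ hμ0]
    | pred k ih =>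
      have h1 := step ((-(k : ℤ) - 1) * g)
      rw [show (-(k : ℤ) - 1) * g + g = -(k : ℤ) * g by ring, ih] at h1
      have h2 := congrArg (fun w => μ⁻¹ • w) h1
      rw [smul_smul, smul_smul, inv_mul_cancel₀ hμ0, one_smul] at h2
      rw [← h2, ← zpow_neg_one, ← zpow_add₀ hμ0]
      ring_nf
  -- the invariant span
  set e : ℤ → V := fun n => ρ (ι n) v with he
  set W := Submodule.span ℂ (Set.range e) with hW
  have hvW : v ∈ W := by
    have h0 : e 0 = v := by rw [he]; dsimp only; rw [ι0, map_one]; rfl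
    exact h0 ▸ Submodule.subset_span ⟨0, rfl⟩
  have hWinv : ∀ g', ∀ w ∈ W, ρ g' w ∈ W := by
    intro g' w hw
    have hmap : W.map (ρ g') ≤ W := by
      rw [hW, Submodule.map_span, Submodule.span_le]
      rintro _ ⟨_, ⟨n, rfl⟩, rfl⟩
      have hg' : g' = inl g'.left * ι (Multiplicative.toAdd g'.right) := by
        rw [hι]; dsimp only; rw [ofAdd_toAdd, inl_left_mul_inr_right]
      rw [he]; dsimp only
      rw [hg', compose, ← compose (ι (Multiplicative.toAdd g'.right)) (ι n) v, ιadd,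
        act hv (Multiplicative.toAdd g'.right + n) g'.left]
      exact Submodule.smul_mem _ _ (Submodule.subset_span ⟨_, rfl⟩)
    exact hmap (Submodule.mem_map_of_mem hw)
  have hWtop : W = ⊤ := by
    rcases hirr.2 W hWinv with h | h
    · exact absurd (Submodule.mem_bot ℂ |>.1 (h ▸ hvW)) hvne
    · exact h
  -- the averaging projector
  set P : V →ₗ[ℂ] V :=
    (Fintype.card A : ℂ)⁻¹ • ∑ a : A, ((χ a : ℂ)⁻¹ • ρ (inl a)) with hP
  have hcard : (Fintype.card A : ℂ) ≠ 0 := Nat.cast_ne_zero.2 Fintype.card_ne_zero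
  have hPfix : ∀ w ∈ Vχ, P w = w := by
    intro w hw
    rw [hP]
    simp only [LinearMap.smul_apply, LinearMap.sum_apply]
    have hterm : ∀ a ∈ Finset.univ, (χ a : ℂ)⁻¹ • ρ (inl a) w = w := by
      intro a _
      rw [memχ.1 hw a, smul_smul, inv_mul_cancel₀ (Units.ne_zero (χ a)), one_smul]
    rw [Finset.sum_congr rfl hterm, Finset.sum_const, Finset.card_univ,
      ← Nat.cast_smul_eq_nsmul ℂ, smul_smul, inv_mul_cancel₀ hcard, one_smul]
  have hPkill : ∀ (n : ℤ) (w : V), (∀ a, ρ (inl a) w = (χ ((σ ^ (-n)) a) : ℂ) • w) →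
      (-n) ∉ S → P w = 0 := by
    intro n w hw hn
    set τ : A →* ℂˣ := (χ.comp (σ ^ (-n) : MulAut A).toMonoidHom) * χ⁻¹ with hτ
    have hτval : ∀ a, (τ a : ℂ) = (χ ((σ ^ (-n)) a) : ℂ) * (χ a : ℂ)⁻¹ := by
      intro a; rw [hτ]; simp
    have hτne : ∃ b, τ b ≠ 1 := by
      rw [memS] at hn
      push_neg at hn
      obtain ⟨b, hb⟩ := hn
      refine ⟨b, fun hone => hb ?_⟩
      have : χ ((σ ^ (-n)) b) * (χ b)⁻¹ = 1 := by
        have := congrArg Units.val hone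
        rw [hτval] at this
        apply Units.ext
        push_cast [Units.val_mul]
        simpa using this
      exact mul_inv_eq_one.1 this
    have hsum : ∑ a, (τ a : ℂ) = 0 := charSum_eq_zero τ hτne
    rw [hP]
    simp only [LinearMap.smul_apply, LinearMap.sum_apply]
    have hterm : ∀ a ∈ Finset.univ, (χ a : ℂ)⁻¹ • ρ (inl a) w = (τ a : ℂ) • w := by
      intro a _
      rw [hw a, smul_smul, hτval, mul_comm]
    rw [Finset.sum_congr rfl hterm, ← Finset.sum_smul, hsum, zero_smul, smul_zero]
  -- conclusion
  have hspan : Vχ = Submodule.span ℂ ({v} : Set V) := by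
    apply le_antisymm
    · intro w hw
      have hwW : w ∈ W := hWtop ▸ Submodule.mem_top
      rw [hW, Finsupp.mem_span_range_iff_exists_finsupp] at hwW
      obtain ⟨c, hc⟩ := hwW
      have hPmem : P w ∈ Submodule.span ℂ ({v} : Set V) := by
        rw [← hc, map_finsuppSum]
        apply Submodule.finsuppSum_mem
        intro n hn
        rw [map_smul]
        apply Submodule.smul_mem
        by_cases hcase : (-n) ∈ S
        · obtain ⟨k, hk⟩ := (memSg n).1 (by simpa using S.neg_mem hcase)
          have hen : e n = μ ^ k • v := by rw [he]; dsimp only; rw [← hk]; exact ekg k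
          have henχ : e n ∈ Vχ := hen ▸ Vχ.smul_mem _ hv
          rw [hPfix _ henχ, hen]
          exact Submodule.smul_mem _ _ (Submodule.mem_span_singleton_self v)
        · rw [hPkill n (e n) (fun a => act hv n a) hcase]
          exact Submodule.zero_mem _
      rwa [hPfix w hw] at hPmem
    · rw [Submodule.span_le, Set.singleton_subset_iff]
      exact hv
  rw [hspan]
  exact finrank_span_singleton hvne
end
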